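/- The Newton product is commutative: for all sequences a, b : ℕ → R, a ⊠ b = b ⊠ a. -/

import Mathlib

open Finset

def newton {R : Type*} [CommRing R] (a b : ℕ → R) : ℕ → R :=
  fun n => ∑ i ∈ Finset.range (n + 1), ∑ j ∈ Finset.range (i + 1),
    (n.choose i : R) * (i.choose j : R) * a i * b (n - j)

lemma choose_key {n i j : ℕ} (hin : i ≤ n) (hji : j ≤ i) :
    n.choose i * i.choose j = n.choose (n - j) * (n - j).choose (n - i) := by
  have e1 : n - (n - i) = i := Nat.sub_sub_self hin
  have e2 : n - j - (n - i) = i - j := by omega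
  rw [eq_comm, Nat.choose_mul (Nat.sub_le_sub_left hji n), e1, e2,
    Nat.choose_symm hin, Nat.choose_symm hji, Nat.choose_mul hji]

theorem newton_comm {R : Type*} [CommRing R] (a b : ℕ → R) :
    newton a b = newton b a := by
  funext n
  unfold newton
  rw [Finset.sum_sigma', Finset.sum_sigma']
  refine Finset.sum_nbij' (fun p => ⟨n - p.2, n - p.1⟩) (fun p => ⟨n - p.2, n - p.1⟩)
    ?_ ?_ ?_ ?_ ?_
  · rintro ⟨i, j⟩ hp
    simp only [Finset.mem_sigma, Finset.mem_range, Nat.lt_succ_iff] at hp ⊢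
    exact ⟨Nat.sub_le n j, Nat.sub_le_sub_left hp.2 n⟩
  · rintro ⟨i, j⟩ hp
    simp only [Finset.mem_sigma, Finset.mem_range, Nat.lt_succ_iff] at hp ⊢
    exact ⟨Nat.sub_le n j, Nat.sub_le_sub_left hp.2 n⟩
  · rintro ⟨i, j⟩ hp
    simp only [Finset.mem_sigma, Finset.mem_range, Nat.lt_succ_iff] at hp
    obtain ⟨hi, hj⟩ := hp
    simp [Nat.sub_sub_self hi, Nat.sub_sub_self (hj.trans hi)]
  · rintro ⟨i, j⟩ hp
    simp only [Finset.mem_sigma, Finset.mem_range, Nat.lt_succ_iff] at hp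
    obtain ⟨hi, hj⟩ := hp
    simp [Nat.sub_sub_self hi, Nat.sub_sub_self (hj.trans hi)]
  · rintro ⟨i, j⟩ hp
    simp only [Finset.mem_sigma, Finset.mem_range, Nat.lt_succ_iff] at hp
    obtain ⟨hi, hj⟩ := hp
    have key := choose_key hi hj
    have : ((n.choose i : ℕ) : R) * (i.choose j : R)
        = ((n.choose (n - j) : ℕ) : R) * ((n - j).choose (n - i) : R) := by
      exact_mod_cast congrArg (Nat.cast : ℕ → R) key
    simp only [Nat.sub_sub_self (hj.trans hi), Nat.sub_sub_self hi]
    calc (n.choose i : R) * (i.choose j : R) * a i * b (n - j)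
        = ((n.choose i : R) * (i.choose j : R)) * (b (n - j) * a i) := by ring
      _ = ((n.choose (n - j) : R) * ((n - j).choose (n - i) : R)) * (b (n - j) * a i) := by
          rw [this]
      _ = _ := by ring
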